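/- Let X ∈ ℝ^{k×m} be a full-rank matrix with k ≥ m ≥ 1 such that every column of X has Euclidean norm r > 0, and let B = 1ₘ1ₘᵀ be the m×m all-ones matrix. Then trace(B(XᵀX)⁻¹) ≥ 1/r². -/

import Mathlib

open Matrix

private lemma symm_dot {m : ℕ} (A : Matrix (Fin m) (Fin m) ℝ) (hs : Aᵀ = A)
    (x y : Fin m → ℝ) : x ⬝ᵥ (A *ᵥ y) = (A *ᵥ x) ⬝ᵥ y := by
  rw [Matrix.dotProduct_mulVec, ← Matrix.mulVec_transpose, hs]

/-- paper's Lemma A.3: for full-rank `X ∈ ℝ^{k×m}` with `k ≥ m ≥ 1`, all of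
whose columns have Euclidean norm `r > 0`, and `B = 1ₘ1ₘᵀ`,
`trace(B(XᵀX)⁻¹) ≥ 1/r²`. -/
theorem trace_allOnes_mul_inv_ge (k m : ℕ) (hm : 1 ≤ m) (hk : m ≤ k)
    (X : Matrix (Fin k) (Fin m) ℝ) (hX : X.rank = m)
    (r : ℝ) (hr : 0 < r) (hcol : ∀ j, Real.sqrt (∑ i, X i j ^ 2) = r) :
    ∀ B : Matrix (Fin m) (Fin m) ℝ,
      B = Matrix.of (fun _ _ => (1 : ℝ)) →
      1 / r ^ 2 ≤ (B * (Xᵀ * X)⁻¹).trace := by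
  rintro B rfl
  set A := Xᵀ * X with hAdef
  have hsymm : Aᵀ = A := by
    rw [hAdef, Matrix.transpose_mul, Matrix.transpose_transpose]
  -- injectivity of mulVec X
  have hXinj : Function.Injective X.mulVecLin := by
    rw [← LinearMap.ker_eq_bot]
    have h1 := X.mulVecLin.finrank_range_add_finrank_ker
    rw [Matrix.rank] at hX
    have h2 : Module.finrank ℝ (Fin m → ℝ) = m := by simp
    rw [hX, h2] at h1
    have h3 : Module.finrank ℝ (LinearMap.ker X.mulVecLin) = 0 := by omega
    exact Submodule.finrank_eq_zero.mp h3
  -- A is positive definite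
  have hApd : A.PosDef := by
    refine Matrix.PosDef.of_dotProduct_mulVec_pos ?_ (fun x hx => ?_)
    · simpa using Matrix.isHermitian_conjTranspose_mul_self X
    · have h0 : X *ᵥ x ≠ 0 := by
        intro h
        apply hx
        have := hXinj (a₁ := x) (a₂ := 0) (by simpa [Matrix.mulVecLin_apply] using h)
        simpa using this
      have hval : (star x) ⬝ᵥ (A *ᵥ x) = (X *ᵥ x) ⬝ᵥ (X *ᵥ x) := by
        rw [hAdef, ← Matrix.mulVec_mulVec, Matrix.dotProduct_mulVec,
          ← Matrix.mulVec_transpose, Matrix.transpose_transpose]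
        simp
      rw [hval]
      have := Matrix.dotProduct_self_star_pos_iff (v := X *ᵥ x) |>.mpr h0
      simpa using this
  have hdet : IsUnit A.det := hApd.det_pos.ne'.isUnit
  have hAinv : A⁻¹.PosSemidef := hApd.inv.posSemidef
  set o : Fin m → ℝ := fun _ => 1 with ho
  set c := o ⬝ᵥ (A⁻¹ *ᵥ o) with hc
  set a := o ⬝ᵥ (A *ᵥ o) with ha
  have hc0 : 0 ≤ c := by
    have := hAinv.dotProduct_mulVec_nonneg o
    simpa [hc] using this
  -- quadratic nonnegativity
  have hAA : A⁻¹ * A = 1 := Matrix.nonsing_inv_mul A hdet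
  have hAA' : A * A⁻¹ = 1 := Matrix.mul_nonsing_inv A hdet
  have hmid : ∀ t : ℝ, 0 ≤ a * (t * t) + (2 * (o ⬝ᵥ o)) * t + c := by
    intro t
    have h := hAinv.dotProduct_mulVec_nonneg (o + t • (A *ᵥ o))
    have h1 : A⁻¹ *ᵥ (A *ᵥ o) = o := by
      rw [Matrix.mulVec_mulVec, hAA, Matrix.one_mulVec]
    have h2 : (A *ᵥ o) ⬝ᵥ (A⁻¹ *ᵥ o) = o ⬝ᵥ o := by
      rw [← symm_dot A hsymm o (A⁻¹ *ᵥ o), Matrix.mulVec_mulVec, hAA', Matrix.one_mulVec]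
    have h3 : (A *ᵥ o) ⬝ᵥ o = a := by
      rw [ha, symm_dot A hsymm o o]
    have expand : (o + t • (A *ᵥ o)) ⬝ᵥ (A⁻¹ *ᵥ (o + t • (A *ᵥ o)))
        = a * (t * t) + (2 * (o ⬝ᵥ o)) * t + c := by
      rw [Matrix.mulVec_add, Matrix.mulVec_smul, h1]
      simp only [dotProduct_add, add_dotProduct, dotProduct_smul, smul_dotProduct,
        smul_eq_mul, h2, h3, ← hc]
      ring
    have hstar : star (o + t • (A *ᵥ o)) = o + t • (A *ᵥ o) := by simp
    rw [hstar, expand] at h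
    exact h
  have key : (o ⬝ᵥ o) ^ 2 ≤ a * c := by
    have hd := discrim_le_zero hmid
    rw [discrim] at hd
    nlinarith [hd]
  have hoo : o ⬝ᵥ o = (m : ℝ) := by simp [dotProduct, ho]
  -- column sums
  have hcol2 : ∀ j, (∑ i, X i j ^ 2) = r ^ 2 := by
    intro j
    have hnn : 0 ≤ ∑ i, X i j ^ 2 := Finset.sum_nonneg fun i _ => sq_nonneg _
    rw [← hcol j, Real.sq_sqrt hnn]
  have hentry : ∀ j j' : Fin m, (∑ i, X i j * X i j') ≤ r ^ 2 := by
    intro j j'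
    have hcs := Finset.sum_mul_sq_le_sq_mul_sq Finset.univ (fun i => X i j) (fun i => X i j')
    simp only [hcol2 j, hcol2 j'] at hcs
    nlinarith [hcs, sq_nonneg r]
  have ha_le : a ≤ (m : ℝ) ^ 2 * r ^ 2 := by
    have hcalc : a = ∑ j : Fin m, ∑ j' : Fin m, ∑ i, X i j * X i j' := by
      simp [ha, dotProduct, Matrix.mulVec, hAdef, Matrix.mul_apply, Matrix.transpose_apply, ho]
    rw [hcalc]
    calc (∑ j : Fin m, ∑ j' : Fin m, ∑ i, X i j * X i j')
        ≤ ∑ _j : Fin m, ∑ _j' : Fin m, r ^ 2 := by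
          apply Finset.sum_le_sum
          intro j _
          apply Finset.sum_le_sum
          intro j' _
          exact hentry j j'
      _ = (m : ℝ) ^ 2 * r ^ 2 := by
          simp [Finset.sum_const]
          ring
  -- trace identity
  have htrace : ((Matrix.of (fun _ _ => (1 : ℝ)) : Matrix (Fin m) (Fin m) ℝ) * A⁻¹).trace = c := by
    rw [hc]
    simp only [Matrix.trace, Matrix.diag, Matrix.mul_apply, Matrix.of_apply, one_mul,
      dotProduct, Matrix.mulVec, ho, mul_one]
    exact Finset.sum_comm
  rw [htrace]
  -- conclude
  have hm1 : (1 : ℝ) ≤ (m : ℝ) := by exact_mod_cast hm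
  have hstep : (m : ℝ) ^ 2 ≤ (m : ℝ) ^ 2 * r ^ 2 * c := by
    calc (m : ℝ) ^ 2 = (o ⬝ᵥ o) ^ 2 := by rw [hoo]
      _ ≤ a * c := key
      _ ≤ (m : ℝ) ^ 2 * r ^ 2 * c := mul_le_mul_of_nonneg_right ha_le hc0
  rw [div_le_iff₀ (by positivity)]
  nlinarith [hstep, sq_nonneg ((m : ℝ) - 1)]
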